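/- If U and V are uniformly bounded covers of a coarse proximity space (X,B,b), then st(U,V) := {st(U,V) : U ∈ U} is a uniformly bounded cover of X. -/
import Mathlib


universe u v w

/-- A coarse proximity space: a set with a bornology and a coarse proximity relation. -/
structure CoarseProximity (X : Type u) where
  bounded : Set (Set X)
  close : Set X → Set X → Prop
  empty_mem : ∅ ∈ bounded
  singleton_mem : ∀ x : X, {x} ∈ bounded
  subset_mem : ∀ A ∈ bounded, ∀ C : Set X, C ⊆ A → C ∈ bounded
  union_mem : ∀ A ∈ bounded, ∀ C ∈ bounded, A ∪ C ∈ bounded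
  symm : ∀ A C : Set X, close A C → close C A
  unbounded_left : ∀ A C : Set X, close A C → A ∉ bounded
  unbounded_right : ∀ A C : Set X, close A C → C ∉ bounded
  inter_close : ∀ A C : Set X, A ∩ C ∉ bounded → close A C
  union_close_iff : ∀ A C D : Set X, (close (A ∪ C) D ↔ close A D ∨ close C D)
  strong : ∀ A C : Set X, ¬ close A C → ∃ E : Set X, ¬ close A E ∧ ¬ close Eᶜ C

namespace CoarseProximity

variable {X : Type u}

/-- The weak asymptotic resemblance induced by a coarse proximity. -/
def phi (P : CoarseProximity X) (A C : Set X) : Prop :=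
  (∀ C' : Set X, C' ⊆ C → C' ∉ P.bounded → P.close A C') ∧
  (∀ A' : Set X, A' ⊆ A → A' ∉ P.bounded → P.close A' C)

/-- `C ≪ A` : `A` is a coarse neighbourhood of `C`. -/
def ll (P : CoarseProximity X) (C A : Set X) : Prop :=
  ¬ P.close C Aᶜ

/-- `A ⊑ C` : `A` is a coarse subset of `C`. -/
def subord (P : CoarseProximity X) (A C : Set X) : Prop :=
  ∀ D : Set X, P.close A D → P.close C D

/-- `A ≪_w C` : `C` is a weak coarse neighbourhood of `A`. -/
def llw (P : CoarseProximity X) (A C : Set X) : Prop :=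
  ∃ D : Set X, P.ll A D ∧ P.subord D C

end CoarseProximity

/-- The star of a set `A` with respect to a collection `U`. -/
def starOf {X : Type u} (A : Set X) (U : Set (Set X)) : Set X :=
  ⋃₀ {B ∈ U | (B ∩ A).Nonempty}

/-- A uniformly bounded family in a coarse proximity space. -/
def IsUnifBoundedFamily {X : Type u} (P : CoarseProximity X) (U : Set (Set X)) : Prop :=
  (∀ B ∈ U, B ∈ P.bounded) ∧
  ∀ A C : Set X, A ⊆ starOf C U → C ⊆ starOf A U → P.phi A C

/-- A uniformly bounded cover in a coarse proximity space. -/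
def IsUnifBoundedCover {X : Type u} (P : CoarseProximity X) (U : Set (Set X)) : Prop :=
  IsUnifBoundedFamily P U ∧ ⋃₀ U = Set.univ

/-- `U` refines `V` : every member of `U` is contained in some member of `V`. -/
def CoverRefines {X : Type u} (U V : Set (Set X)) : Prop :=
  ∀ A ∈ U, ∃ B ∈ V, A ⊆ B

/-- The order of a collection of sets is at most `n`. -/
def CoverOrderLE {X : Type u} (U : Set (Set X)) (n : ℕ) : Prop :=
  ∀ (x : X) (s : Finset (Set X)), (s : Set (Set X)) ⊆ U → (∀ B ∈ s, x ∈ B) → s.card ≤ n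

/-- `asdim X ≤ n` : every uniformly bounded cover refines a uniformly bounded cover of
order at most `n+1`. -/
def AsdimLE {X : Type u} (P : CoarseProximity X) (n : ℕ) : Prop :=
  ∀ U : Set (Set X), IsUnifBoundedCover P U →
    ∃ V : Set (Set X), IsUnifBoundedCover P V ∧ CoverOrderLE V (n + 1) ∧ CoverRefines U V

/-- A b-cover of a coarse proximity space. -/
def IsBCover {X : Type u} (P : CoarseProximity X) (F : Finset (Set X)) : Prop :=
  (∀ A ∈ F, ∀ B ∈ F, A ∈ P.bounded → B ∈ P.bounded → A = B) ∧
  (⋃ A ∈ F, A) = Set.univ ∧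
  ∃ C : Set X → Set X, (⋃ A ∈ F, C A) = Set.univ ∧ ∀ A ∈ F, P.ll (C A) A

/-- A finite family is divergent if the family of complements is a b-cover. -/
def DivergentFam {X : Type u} (P : CoarseProximity X) (S : Finset (Set X)) : Prop :=
  haveI : DecidableEq (Set X) := Classical.decEq _
  IsBCover P (S.image fun A => Aᶜ)

/-- A coarsely canonical cover of a coarse proximity space. -/
def IsCoarselyCanonicalCover {X : Type u} (P : CoarseProximity X) (F : Finset (Set X)) : Prop :=
  (∀ A ∈ F, ∀ B ∈ F, A ≠ B → A ∩ B = ∅) ∧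
  (⋃ A ∈ F, A) = Set.univ ∧
  (∀ A ∈ F, ∀ B ∈ F, A ∈ P.bounded → B ∈ P.bounded → A = B) ∧
  (∀ A ∈ F, A ∉ P.bounded → ∃ K : Set X, K ∉ P.bounded ∧ P.llw K A) ∧
  (∀ A ∈ F, ∀ B ∈ F, A ≠ B → ¬ ∃ K : Set X, K ∉ P.bounded ∧ P.llw K A ∧ P.llw K B) ∧
  (∀ K D : Set X, K ∉ P.bounded → P.ll K D →
    ∃ C : Set X, C ∉ P.bounded ∧ P.ll C D ∧ ∃ A ∈ F, P.llw C A)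

/-- The order of a coarsely canonical cover is at most `m` : every `m+1` of its members
form a divergent family. -/
def CCCoverOrderLE {X : Type u} (P : CoarseProximity X) (F : Finset (Set X)) (m : ℕ) : Prop :=
  ∀ S : Finset (Set X), S ⊆ F → S.card = m + 1 → DivergentFam P S

/-- `V` coarsely refines `U`. -/
def CoarselyRefines {X : Type u} (P : CoarseProximity X) (V U : Finset (Set X)) : Prop :=
  ∀ A ∈ V, A ∉ P.bounded → ∃ B ∈ U, B ∉ P.bounded ∧ ∃ D ∈ P.bounded, A \ D ⊆ B

/-- A fine directed system of coarsely canonical covers. -/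
def IsFineDirectedSystem {X : Type u} (P : CoarseProximity X) {Ω : Type v} [Preorder Ω]
    (F : Ω → Finset (Set X)) : Prop :=
  Nonempty Ω ∧
  (∀ α β : Ω, ∃ γ : Ω, α ≤ γ ∧ β ≤ γ) ∧
  (∀ α, IsCoarselyCanonicalCover P (F α)) ∧
  (∀ α β : Ω, α ≤ β → CoarselyRefines P (F β) (F α)) ∧
  (∀ U : Finset (Set X), IsBCover P U → ∃ α, CoarselyRefines P (F α) U)

section Aux

variable {X : Type u} (P : CoarseProximity X)

lemma aux_close_mono_left {A A' D : Set X} (h : P.close A' D) (hs : A' ⊆ A) :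
    P.close A D := by
  have h2 := (P.union_close_iff A' A D).mpr (Or.inl h)
  rwa [Set.union_eq_self_of_subset_left hs] at h2

lemma aux_close_mono_right {A D D' : Set X} (h : P.close A D') (hs : D' ⊆ D) :
    P.close A D :=
  P.symm _ _ (aux_close_mono_left P (P.symm _ _ h) hs)

lemma aux_phi_symm {A B : Set X} (h : P.phi A B) : P.phi B A :=
  ⟨fun A' hs hu => P.symm _ _ (h.2 A' hs hu), fun B' hs hu => P.symm _ _ (h.1 B' hs hu)⟩

lemma aux_phi_trans_half {A B C : Set X} (hAB : P.phi A B) (hBC : P.phi B C) :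
    ∀ C' ⊆ C, C' ∉ P.bounded → P.close A C' := by
  intro C' hs hu
  by_contra hnc
  obtain ⟨E, hAE, hEC⟩ := P.strong A C' hnc
  have hB : P.close B C' := hBC.1 C' hs hu
  have hsplit : P.close (B ∩ E) C' ∨ P.close (B ∩ Eᶜ) C' := by
    apply (P.union_close_iff (B ∩ E) (B ∩ Eᶜ) C').mp
    rwa [Set.inter_union_compl]
  rcases hsplit with h1 | h2
  · have hunb : B ∩ E ∉ P.bounded := P.unbounded_left _ _ h1
    have hAe : P.close A (B ∩ E) := hAB.1 (B ∩ E) Set.inter_subset_left hunb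
    exact hAE (aux_close_mono_right P hAe Set.inter_subset_right)
  · exact hEC (aux_close_mono_left P h2 Set.inter_subset_right)

lemma aux_phi_trans {A B C : Set X} (hAB : P.phi A B) (hBC : P.phi B C) :
    P.phi A C :=
  ⟨aux_phi_trans_half P hAB hBC, fun A' hs hu =>
    P.symm _ _ (aux_phi_trans_half P (aux_phi_symm P hBC) (aux_phi_symm P hAB) A' hs hu)⟩

lemma aux_starOf_mono {A C : Set X} {F : Set (Set X)} (h : A ⊆ C) :
    starOf A F ⊆ starOf C F := by
  rintro x ⟨S, ⟨hSF, y, hyS, hyA⟩, hxS⟩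
  exact ⟨S, ⟨hSF, y, hyS, h hyA⟩, hxS⟩

lemma aux_subset_starOf {A : Set X} {F : Set (Set X)} (hcov : ⋃₀ F = Set.univ) :
    A ⊆ starOf A F := by
  intro x hx
  obtain ⟨S, hSF, hxS⟩ : ∃ S ∈ F, x ∈ S := by
    have : x ∈ ⋃₀ F := hcov ▸ Set.mem_univ x
    exact this
  exact ⟨S, ⟨hSF, x, hxS, hx⟩, hxS⟩

lemma aux_phi_star {F : Set (Set X)} (hF : IsUnifBoundedCover P F) (D : Set X) :
    P.phi D (starOf D F) := by
  apply hF.1.2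
  · exact (aux_subset_starOf hF.2).trans (aux_starOf_mono (aux_subset_starOf hF.2))
  · exact subset_rfl

lemma aux_star_star {C : Set X} {U V : Set (Set X)} :
    starOf C {W : Set X | ∃ A ∈ U, W = starOf A V} ⊆
      starOf (starOf (starOf C V) U) V := by
  rintro x ⟨S, ⟨hSW, y, hyS, hyC⟩, hxS⟩
  obtain ⟨A₀, hA₀U, rfl⟩ := hSW
  obtain ⟨B', ⟨hB'V, z, hzB', hzA₀⟩, hyB'⟩ := hyS
  have hB'sub : B' ⊆ starOf C V := fun w hw => ⟨B', ⟨hB'V, y, hyB', hyC⟩, hw⟩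
  have hA₀sub : A₀ ⊆ starOf (starOf C V) U :=
    fun w hw => ⟨A₀, ⟨hA₀U, z, hzA₀, hB'sub hzB'⟩, hw⟩
  obtain ⟨B, ⟨hBV, w, hwB, hwA₀⟩, hxB⟩ := hxS
  exact ⟨B, ⟨hBV, w, hwB, hA₀sub hwA₀⟩, hxB⟩

end Aux

/-- If `U` and `V` are uniformly bounded covers of a coarse proximity space, then
`st(U,V) = {st(A,V) : A ∈ U}` is a uniformly bounded cover. -/
theorem star_unifBoundedCover {X : Type u} (P : CoarseProximity X)
    (U V : Set (Set X)) (hU : IsUnifBoundedCover P U) (hV : IsUnifBoundedCover P V) :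
    IsUnifBoundedCover P {W : Set X | ∃ A ∈ U, W = starOf A V} := by
  constructor
  · constructor
    · rintro W ⟨A, hAU, rfl⟩
      by_contra hunb
      have hphi := aux_phi_star P hV A
      have hclose : P.close A (starOf A V) := hphi.1 _ subset_rfl hunb
      exact P.unbounded_left _ _ hclose (hU.1.1 A hAU)
    · intro A C hA hC
      have hAE : A ⊆ starOf (starOf (starOf C V) U) V := hA.trans aux_star_star
      have hCF : C ⊆ starOf (starOf (starOf A V) U) V := hC.trans aux_star_star
      have hCE : P.phi C (starOf (starOf (starOf C V) U) V) :=
        aux_phi_trans P (aux_phi_star P hV C)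
          (aux_phi_trans P (aux_phi_star P hU _) (aux_phi_star P hV _))
      have hAF : P.phi A (starOf (starOf (starOf A V) U) V) :=
        aux_phi_trans P (aux_phi_star P hV A)
          (aux_phi_trans P (aux_phi_star P hU _) (aux_phi_star P hV _))
      constructor
      · intro C' hs hu
        exact hAF.1 C' (hs.trans hCF) hu
      · intro A' hs hu
        exact P.symm _ _ (hCE.1 A' (hs.trans hAE) hu)
  · apply Set.eq_univ_of_forall
    intro x
    have hx : x ∈ ⋃₀ U := hU.2 ▸ Set.mem_univ x
    obtain ⟨A, hAU, hxA⟩ := hx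
    have hx2 : x ∈ ⋃₀ V := hV.2 ▸ Set.mem_univ x
    obtain ⟨B, hBV, hxB⟩ := hx2
    exact ⟨starOf A V, ⟨A, hAU, rfl⟩, ⟨B, ⟨hBV, x, hxB, hxA⟩, hxB⟩⟩
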